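/- For all real constants C > 0 and γ > 2 there exists a constant K > 0 (depending only on C and γ) such that the following holds: for every finite simple undirected connected graph G=(V,E) with |V| ≥ 2 and diameter Δ, and every ρ ∈ (0,1], if |{v ∈ V : d(v) = k}| ≤ C·|V|/k^γ for every positive integer k, then min-seed^{(Δ)}(G,ρ) ≤ K·⌈ρ^{γ−1}·|V|⌉. -/

import Mathlib

/-- One round of the synchronous reversible cascade on an undirected graph:
`ractive G ρ S k` is the set of active vertices in round `k`, starting from seed set `S`. -/
def ractive {V : Type*} (G : SimpleGraph V) (ρ : ℝ) (S : Set V) : ℕ → Set V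
  | 0 => S
  | k + 1 =>
      {v | 0 < (G.neighborSet v).ncard ∧
        ρ * (G.neighborSet v).ncard ≤ ((G.neighborSet v ∩ ractive G ρ S k).ncard : ℝ)} ∪
      {v | v ∈ S ∧ (G.neighborSet v).ncard = 0}

/-- `minSeed G ρ k` is the minimum number of seeds activating all vertices in round `k`. -/
noncomputable def minSeed {V : Type*} (G : SimpleGraph V) (ρ : ℝ) (k : ℕ) : ℕ :=
  sInf {m | ∃ S : Set V, S.ncard = m ∧ ractive G ρ S k = Set.univ}


lemma mem_ractive_succ {V : Type*} {G : SimpleGraph V} {ρ : ℝ} {S : Set V} {k : ℕ} {v : V}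
    (h1 : 0 < (G.neighborSet v).ncard)
    (h2 : ρ * (G.neighborSet v).ncard ≤ ((G.neighborSet v ∩ ractive G ρ S k).ncard : ℝ)) :
    v ∈ ractive G ρ S (k + 1) := by
  show v ∈ _ ∪ _
  exact Set.mem_union_left _ ⟨h1, h2⟩

lemma ractive_sustain {V : Type*} [Finite V] {G : SimpleGraph V} {ρ : ℝ} {S : Set V}
    (hS : ∀ v ∈ S, 0 < (G.neighborSet v).ncard ∧
      ρ * (G.neighborSet v).ncard ≤ ((G.neighborSet v ∩ S).ncard : ℝ)) :
    ∀ k, S ⊆ ractive G ρ S k := by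
  intro k
  induction k with
  | zero => exact fun v hv => hv
  | succ k ih =>
    intro v hv
    refine mem_ractive_succ (hS v hv).1 (le_trans (hS v hv).2 ?_)
    exact_mod_cast Nat.cast_le.mpr
      (Set.ncard_le_ncard (Set.inter_subset_inter_right _ ih) (Set.toFinite _))

lemma ractive_spread {V : Type*} [Finite V] {G : SimpleGraph V} (hG : G.Connected)
    {ρ : ℝ} {S : Set V} {u0 : V} (hu0 : u0 ∈ S)
    (hS : ∀ v ∈ S, 0 < (G.neighborSet v).ncard ∧
      ρ * (G.neighborSet v).ncard ≤ ((G.neighborSet v ∩ S).ncard : ℝ))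
    (hhigh : ∀ v, 1 < ρ * (G.neighborSet v).ncard → v ∈ S)
    (hdeg : ∀ v, 0 < (G.neighborSet v).ncard) :
    ∀ k v, G.dist u0 v ≤ k → v ∈ ractive G ρ S k := by
  intro k
  induction k with
  | zero =>
    intro v hv
    have h0 : G.dist u0 v = 0 := Nat.le_zero.mp hv
    have : u0 = v := by
      by_contra hne
      exact hne ((hG u0 v).dist_eq_zero_iff.mp h0)
    exact this ▸ hu0
  | succ k ih =>
    intro v hv
    by_cases hvS : v ∈ S
    · exact ractive_sustain hS (k + 1) hvS
    · have hlow : ρ * (G.neighborSet v).ncard ≤ 1 := le_of_not_gt (fun h => hvS (hhigh v h))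
      have hne : v ≠ u0 := fun h => hvS (h ▸ hu0)
      obtain ⟨p, hp⟩ := hG.exists_walk_length_eq_dist v u0
      have hnil : ¬ p.Nil := fun h => hne h.eq
      set w := p.getVert 1 with hw
      have hadj : G.Adj v w := p.adj_snd hnil
      have hwk : G.dist u0 w ≤ k := by
        rw [G.dist_comm]
        have h1 : G.dist w u0 ≤ p.tail.length := SimpleGraph.dist_le _
        have h2 : p.tail.length + 1 = p.length := p.length_tail_add_one hnil
        have h3 : p.length = G.dist v u0 := hp
        have h4 : G.dist v u0 ≤ k + 1 := by rwa [G.dist_comm]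
        omega
      have hwr : w ∈ ractive G ρ S k := ih w hwk
      refine mem_ractive_succ (hdeg v) (le_trans hlow ?_)
      have : 0 < (G.neighborSet v ∩ ractive G ρ S k).ncard := by
        rw [Set.ncard_pos (Set.toFinite _)]
        exact ⟨w, hadj, hwr⟩
      exact_mod_cast this

lemma rpow_telescope {s x : ℝ} (hs : 1 < s) (hx : 2 ≤ x) :
    (s - 1) * x ^ (-s) ≤ (x - 1) ^ (1 - s) - x ^ (1 - s) := by
  set r : ℝ := s - 1 with hrdef
  have hr : 0 < r := by simp [hrdef]; linarith
  have hx0 : (0:ℝ) < x := by linarith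
  set t : ℝ := 1 / x with htdef
  have ht : 0 < t := by positivity
  have ht1 : t < 1 := by
    rw [htdef, div_lt_one hx0]; linarith
  have h1t : (0:ℝ) < 1 - t := by linarith
  have h1rt : (0:ℝ) < 1 + r * t := by nlinarith
  have hlog1 : Real.log (1 - t) ≤ -t := by
    have := Real.log_le_sub_one_of_pos h1t; linarith
  have hlog2 : Real.log (1 + r * t) ≤ r * t := by
    have := Real.log_le_sub_one_of_pos h1rt; linarith
  have key : (1 + r * t) * (1 - t) ^ r ≤ 1 := by
    have e : (1 + r * t) * (1 - t) ^ r =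
        Real.exp (Real.log (1 + r * t) + r * Real.log (1 - t)) := by
      rw [Real.exp_add, Real.exp_log h1rt, Real.rpow_def_of_pos h1t]
      ring
    rw [e]
    calc Real.exp (Real.log (1 + r * t) + r * Real.log (1 - t))
        ≤ Real.exp 0 := by
          apply Real.exp_le_exp.mpr
          have := mul_le_mul_of_nonneg_left hlog1 hr.le
          nlinarith
      _ = 1 := Real.exp_zero
  have key2 : 1 + r * t ≤ (1 - t) ^ (-r) := by
    rw [Real.rpow_neg h1t.le, ← one_div, le_div_iff₀ (Real.rpow_pos_of_pos h1t r)]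
    exact key
  have hxr : (0:ℝ) < x ^ (-r) := Real.rpow_pos_of_pos hx0 _
  have e2 : x ^ (1 - s) = x ^ (-r) := by norm_num [hrdef]
  have e3 : x ^ (-s) = x ^ (-r) * t := by
    have : x ^ (-s) = x ^ (-r) * x ^ (-1 : ℝ) := by
      rw [← Real.rpow_add hx0]; rw [hrdef]; ring_nf
    rw [this, Real.rpow_neg_one, htdef, ← one_div]
  have e1 : (x - 1) ^ (1 - s) = x ^ (-r) * (1 - t) ^ (-r) := by
    have hx1 : x - 1 = x * (1 - t) := by
      rw [htdef, mul_sub, mul_one, mul_one_div_cancel hx0.ne']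
    rw [hx1, ← Real.mul_rpow hx0.le h1t.le]
    norm_num [hrdef]
  rw [e1, e2, e3]
  nlinarith [mul_le_mul_of_nonneg_left key2 hxr.le]

lemma tail_sum {s : ℝ} (hs : 1 < s) (m : ℕ) (hm : 1 ≤ m) (b : ℕ) :
    ∑ k ∈ Finset.Icc (m + 1) b, ((k : ℝ)) ^ (-s) ≤ (m : ℝ) ^ (1 - s) / (s - 1) := by
  have hs1 : (0:ℝ) < s - 1 := by linarith
  have main : ∀ b : ℕ, (s - 1) * ∑ k ∈ Finset.Icc (m + 1) b, ((k : ℝ)) ^ (-s) ≤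
      (m : ℝ) ^ (1 - s) - ((max m b : ℕ) : ℝ) ^ (1 - s) := by
    intro b
    induction b with
    | zero =>
      rw [Finset.Icc_eq_empty (by omega)]
      simp [Nat.max_eq_left (Nat.zero_le m)]
    | succ b ih =>
      by_cases hb : m + 1 ≤ b + 1
      · have hmb : m ≤ b := by omega
        rw [Nat.max_eq_right hmb] at ih
        rw [Finset.sum_Icc_succ_top hb, Nat.max_eq_right (by omega : m ≤ b + 1)]
        have htel : (s - 1) * (((b:ℝ) + 1)) ^ (-s) ≤
            ((b:ℝ)) ^ (1 - s) - ((b:ℝ) + 1) ^ (1 - s) := by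
          have h2 : (2:ℝ) ≤ (b:ℝ) + 1 := by
            have : 1 ≤ b := le_trans hm hmb
            exact_mod_cast Nat.succ_le_succ this
          have := rpow_telescope hs h2
          simpa using this
        push_cast
        push_cast at ih
        nlinarith
      · have hmb : b + 1 ≤ m := by omega
        rw [Finset.Icc_eq_empty (by omega), Nat.max_eq_left (by omega)]
        simp
  have hb := main b
  have hmax : (0:ℝ) ≤ ((max m b : ℕ) : ℝ) ^ (1 - s) :=
    Real.rpow_nonneg (by positivity) _
  rw [le_div_iff₀ hs1, mul_comm]
  linarith

lemma degree_sum_bound {V : Type} [Fintype V] [DecidableEq V] (G : SimpleGraph V)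
    [DecidableRel G.Adj] (C γ ρ : ℝ) (hC : 0 < C) (hγ : 2 < γ) (hρ : 0 < ρ) (hρh : ρ ≤ 1/2)
    (hpl : ∀ k : ℕ, 0 < k →
      ((Finset.univ.filter (fun v => G.degree v = k)).card : ℝ) ≤
        C * (Fintype.card V) / (k : ℝ) ^ γ)
    (H : Finset V) (hH : ∀ v ∈ H, 1 < ρ * (G.degree v : ℝ)) :
    ∑ v ∈ H, (2 + ρ * (G.degree v : ℝ)) ≤
      C * (Fintype.card V) *
        (2 * (2:ℝ) ^ (γ - 1) * ρ ^ (γ - 1) / (γ - 1) +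
          (2:ℝ) ^ (γ - 2) * ρ ^ (γ - 1) / (γ - 2)) := by
  set n := Fintype.card V with hn
  set m : ℕ := ⌊1/ρ⌋₊ with hmdef
  have hm1 : 1 ≤ m := by
    rw [hmdef]
    apply Nat.le_floor
    push_cast
    rw [le_div_iff₀ hρ]
    linarith
  have hmle : (m : ℝ) ≤ 1/ρ := Nat.floor_le (by positivity)
  have hmρ : 1/(2*ρ) ≤ (m : ℝ) := by
    have h2 : (1:ℝ)/ρ - 1 < m := Nat.sub_one_lt_floor _
    have h3 : (1:ℝ) ≤ 1/(2*ρ) := by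
      rw [le_div_iff₀ (by linarith)]; linarith
    have h4 : 1/(2*ρ) + 1/(2*ρ) = 1/ρ := by
      rw [← add_div]
      rw [show (1:ℝ) + 1 = 2 by norm_num]
      rw [eq_div_iff (ne_of_gt hρ)]
      field_simp
    linarith
  have hmap : ∀ v ∈ H, G.degree v ∈ Finset.Icc (m + 1) n := by
    intro v hv
    rw [Finset.mem_Icc]
    constructor
    · have h1 : 1/ρ < (G.degree v : ℝ) := by
        rw [div_lt_iff₀ hρ]
        have := hH v hv; linarith [mul_comm ρ ((G.degree v : ℝ))]
      have : (m:ℝ) < (G.degree v : ℝ) := lt_of_le_of_lt hmle h1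
      exact_mod_cast this
    · exact le_of_lt (G.degree_lt_card_verts v)
  have fiber : ∑ v ∈ H, (2 + ρ * (G.degree v : ℝ)) =
      ∑ k ∈ Finset.Icc (m + 1) n,
        ∑ v ∈ H.filter (fun v => G.degree v = k), (2 + ρ * (G.degree v : ℝ)) :=
    (Finset.sum_fiberwise_of_maps_to hmap _).symm
  have inner : ∀ k ∈ Finset.Icc (m + 1) n,
      ∑ v ∈ H.filter (fun v => G.degree v = k), (2 + ρ * (G.degree v : ℝ)) ≤
        (2 + ρ * k) * (C * n / (k : ℝ) ^ γ) := by
    intro k hk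
    have hkpos : 0 < k := by
      rw [Finset.mem_Icc] at hk; omega
    have e1 : ∑ v ∈ H.filter (fun v => G.degree v = k), (2 + ρ * (G.degree v : ℝ)) =
        ((H.filter (fun v => G.degree v = k)).card : ℝ) * (2 + ρ * k) :=
      calc ∑ v ∈ H.filter (fun v => G.degree v = k), (2 + ρ * (G.degree v : ℝ))
          = ∑ _v ∈ H.filter (fun v => G.degree v = k), (2 + ρ * (k : ℝ)) :=
            Finset.sum_congr rfl (fun v hv => by
              rw [(Finset.mem_filter.mp hv).2])
        _ = _ := by rw [Finset.sum_const, nsmul_eq_mul]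
    rw [e1]
    have hcard : ((H.filter (fun v => G.degree v = k)).card : ℝ) ≤ C * n / (k : ℝ) ^ γ := by
      refine le_trans ?_ (hpl k hkpos)
      have : H.filter (fun v => G.degree v = k) ⊆
          Finset.univ.filter (fun v => G.degree v = k) := by
        intro v hv
        rw [Finset.mem_filter] at *
        exact ⟨Finset.mem_univ v, hv.2⟩
      exact_mod_cast Finset.card_le_card this
    have h2ρk : (0:ℝ) ≤ 2 + ρ * k := by positivity
    calc ((H.filter (fun v => G.degree v = k)).card : ℝ) * (2 + ρ * k)
        ≤ (C * n / (k : ℝ) ^ γ) * (2 + ρ * k) :=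
          mul_le_mul_of_nonneg_right hcard h2ρk
      _ = (2 + ρ * k) * (C * n / (k : ℝ) ^ γ) := by ring
  have split : ∀ k ∈ Finset.Icc (m + 1) n,
      (2 + ρ * k) * (C * n / (k : ℝ) ^ γ) =
        (C * n * 2) * (k : ℝ) ^ (-γ) + (C * n * ρ) * (k : ℝ) ^ (-(γ-1)) := by
    intro k hk
    have hkpos' : 0 < k := by rw [Finset.mem_Icc] at hk; omega
    have hkpos : (0:ℝ) < k := by exact_mod_cast hkpos'
    have hk1 : (k:ℝ) ^ (-(γ-1)) = (k:ℝ) * (k:ℝ) ^ (-γ) := by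
      rw [show -(γ-1) = 1 + -γ by ring, Real.rpow_add hkpos, Real.rpow_one]
    have hk2 : (k:ℝ) ^ (-γ) = ((k:ℝ) ^ γ)⁻¹ := Real.rpow_neg hkpos.le γ
    have hkγ : (0:ℝ) < (k:ℝ) ^ γ := Real.rpow_pos_of_pos hkpos γ
    rw [hk1, hk2]
    field_simp
  have hsum1 := tail_sum (by linarith : (1:ℝ) < γ) m hm1 n
  have hsum2 := tail_sum (by linarith : (1:ℝ) < γ - 1) m hm1 n
  rw [show (1 : ℝ) - (γ - 1) = 2 - γ by ring, show γ - 1 - 1 = γ - 2 by ring] at hsum2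
  have h2ρpos : (0:ℝ) < 2 * ρ := by linarith
  have hinv : ∀ c : ℝ, c ≤ 0 → (m:ℝ) ^ c ≤ (2*ρ) ^ (-c) := by
    intro c hc
    have h1 : (m:ℝ) ^ c ≤ (1/(2*ρ)) ^ c :=
      Real.rpow_le_rpow_of_nonpos (by positivity) hmρ hc
    have h2 : (1/(2*ρ)) ^ c = (2*ρ) ^ (-c) := by
      rw [one_div, ← Real.rpow_neg_one, ← Real.rpow_mul h2ρpos.le, neg_one_mul]
    rw [← h2]; exact h1
  have hmc1 : (m:ℝ) ^ (1-γ) ≤ (2:ℝ) ^ (γ-1) * ρ ^ (γ-1) := by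
    have := hinv (1-γ) (by linarith)
    rw [show -(1-γ) = γ-1 by ring, Real.mul_rpow (by norm_num) hρ.le] at this
    exact this
  have hmc2 : (m:ℝ) ^ (2-γ) ≤ (2:ℝ) ^ (γ-2) * ρ ^ (γ-2) := by
    have := hinv (2-γ) (by linarith)
    rw [show -(2-γ) = γ-2 by ring, Real.mul_rpow (by norm_num) hρ.le] at this
    exact this
  have hρρ : ρ * ρ ^ (γ-2) = ρ ^ (γ-1) := by
    have := (Real.rpow_add hρ 1 (γ-2)).symm
    rw [Real.rpow_one, show (1:ℝ) + (γ-2) = γ-1 by ring] at this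
    exact this
  have hnn : (0:ℝ) ≤ C * n := by positivity
  calc ∑ v ∈ H, (2 + ρ * (G.degree v : ℝ))
      ≤ ∑ k ∈ Finset.Icc (m + 1) n, (2 + ρ * k) * (C * n / (k : ℝ) ^ γ) := by
        rw [fiber]; exact Finset.sum_le_sum inner
    _ = ∑ k ∈ Finset.Icc (m + 1) n,
          ((C * n * 2) * (k : ℝ) ^ (-γ) + (C * n * ρ) * (k : ℝ) ^ (-(γ-1))) :=
        Finset.sum_congr rfl split
    _ = (C * n * 2) * ∑ k ∈ Finset.Icc (m + 1) n, (k : ℝ) ^ (-γ) +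
          (C * n * ρ) * ∑ k ∈ Finset.Icc (m + 1) n, (k : ℝ) ^ (-(γ-1)) := by
        rw [Finset.sum_add_distrib, Finset.mul_sum, Finset.mul_sum]
    _ ≤ (C * n * 2) * ((m:ℝ) ^ (1-γ) / (γ-1)) + (C * n * ρ) * ((m:ℝ) ^ (2-γ) / (γ-2)) := by
        apply add_le_add
        · exact mul_le_mul_of_nonneg_left hsum1 (by positivity)
        · exact mul_le_mul_of_nonneg_left hsum2 (by positivity)
    _ ≤ (C * n * 2) * (((2:ℝ) ^ (γ-1) * ρ ^ (γ-1)) / (γ-1)) +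
          (C * n * ρ) * (((2:ℝ) ^ (γ-2) * ρ ^ (γ-2)) / (γ-2)) := by
        have hd1 : (0:ℝ) < γ - 1 := by linarith
        have hd2 : (0:ℝ) < γ - 2 := by linarith
        apply add_le_add
        · exact mul_le_mul_of_nonneg_left (div_le_div_of_nonneg_right hmc1 hd1.le) (by positivity)
        · exact mul_le_mul_of_nonneg_left (div_le_div_of_nonneg_right hmc2 hd2.le) (by positivity)
    _ = C * n *
        (2 * (2:ℝ) ^ (γ - 1) * ρ ^ (γ - 1) / (γ - 1) +
          (2:ℝ) ^ (γ - 2) * ρ ^ (γ - 1) / (γ - 2)) := by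
        rw [← hρρ]; ring

set_option maxHeartbeats 1000000 in
theorem stmt_12 (C γ : ℝ) (hC : 0 < C) (hγ : 2 < γ) :
    ∃ K : ℝ, 0 < K ∧
      ∀ (V : Type) [Fintype V] (G : SimpleGraph V), G.Connected → 2 ≤ Fintype.card V →
        ∀ ρ : ℝ, 0 < ρ → ρ ≤ 1 →
          (∀ k : ℕ, 0 < k →
            ((({v : V | (G.neighborSet v).ncard = k} : Set V).ncard : ℝ) ≤
              C * (Fintype.card V) / (k : ℝ) ^ γ)) →
          (minSeed G ρ G.diam : ℝ) ≤ K * (⌈ρ ^ (γ - 1) * (Fintype.card V : ℝ)⌉ : ℝ) := by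
  classical
  have h21 : (0:ℝ) < (2:ℝ) ^ (γ - 1) := Real.rpow_pos_of_pos (by norm_num) _
  have h22 : (0:ℝ) < (2:ℝ) ^ (γ - 2) := Real.rpow_pos_of_pos (by norm_num) _
  set K1 : ℝ := C * (2 * (2:ℝ) ^ (γ - 1) / (γ - 1) + (2:ℝ) ^ (γ - 2) / (γ - 2)) with hK1def
  have hK1pos : 0 < K1 := by
    have hd1 : (0:ℝ) < γ - 1 := by linarith
    have hd2 : (0:ℝ) < γ - 2 := by linarith
    positivity
  refine ⟨K1 + 2 + (2:ℝ) ^ (γ - 1), by linarith, ?_⟩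
  intro V _ G hG hcard ρ hρ hρ1 hpl
  haveI : Nontrivial V := Fintype.one_lt_card_iff_nontrivial.mp (by omega)
  set n := Fintype.card V with hndef
  -- basic facts
  have hb : ∀ v : V, (G.neighborSet v).ncard = G.degree v := by
    intro v
    rw [Set.ncard_eq_toFinset_card', Set.toFinset_card, SimpleGraph.card_neighborSet_eq_degree]
  have hdegpos : ∀ v : V, 0 < G.degree v := by
    intro v
    obtain ⟨y, hy⟩ := exists_ne v
    obtain ⟨p⟩ := hG v y
    have hnil : ¬ p.Nil := fun h => hy (h.eq).symm
    rw [G.degree_pos_iff_exists_adj]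
    exact ⟨p.getVert 1, p.adj_snd hnil⟩
  have hnc : ∀ v : V, 0 < (G.neighborSet v).ncard := fun v => by
    rw [hb]; exact hdegpos v
  have hediam : G.ediam ≠ ⊤ := by
    obtain ⟨u, v, huv⟩ := SimpleGraph.exists_edist_eq_ediam_of_finite (G := G)
    rw [← huv]
    exact SimpleGraph.edist_ne_top_iff_reachable.mpr (hG u v)
  have hdist : ∀ u v : V, G.dist u v ≤ G.diam := fun u v =>
    SimpleGraph.dist_le_diam hediam
  -- ceiling facts
  set A : ℝ := ρ ^ (γ - 1) * n with hAdef
  have hApos : 0 < A := by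
    have : (0:ℝ) < n := by exact_mod_cast (by omega : 0 < n)
    have := Real.rpow_pos_of_pos hρ (γ - 1)
    positivity
  set B : ℝ := (⌈A⌉ : ℝ) with hBdef
  have hB1 : 1 ≤ B := by
    have h : (1:ℤ) ≤ ⌈A⌉ := Int.ceil_pos.mpr hApos
    rw [hBdef]
    exact_mod_cast h
  have hBA : A ≤ B := Int.le_ceil A
  -- min seed bound helper
  have hms : ∀ S : Set V, ractive G ρ S G.diam = Set.univ →
      minSeed G ρ G.diam ≤ S.ncard := by
    intro S hS
    exact Nat.sInf_le ⟨S, rfl, hS⟩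
  rcases le_or_gt ρ (1/2) with hhalf | hhalf
  · -- main case
    have hsel : ∀ v : V, ∃ t ⊆ G.neighborFinset v, t.card = ⌈ρ * (G.degree v : ℝ)⌉₊ := by
      intro v
      apply Finset.exists_subset_card_eq
      rw [SimpleGraph.card_neighborFinset_eq_degree]
      apply Nat.ceil_le.mpr
      have h0 : (0:ℝ) ≤ (G.degree v : ℝ) := by positivity
      nlinarith
    choose P hPsub hPcard using hsel
    set H : Finset V := Finset.univ.filter (fun v => 1 < ρ * (G.degree v : ℝ)) with hHdef
    have u0 : V := Classical.arbitrary V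
    obtain ⟨u1, hadj01⟩ := (G.degree_pos_iff_exists_adj u0).mp (hdegpos u0)
    set Sfin : Finset V := (H ∪ H.biUnion P) ∪ {u0, u1} with hSfdef
    set S : Set V := (↑Sfin : Set V) with hSdef
    have hu0S : u0 ∈ S := by
      rw [hSdef]
      norm_cast
      rw [hSfdef]
      apply Finset.mem_union_right
      simp
    have hu1S : u1 ∈ S := by
      rw [hSdef]
      norm_cast
      rw [hSfdef]
      apply Finset.mem_union_right
      simp
    have hHsub : ∀ v ∈ H, v ∈ S := by
      intro v hv
      rw [hSdef]
      norm_cast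
      rw [hSfdef]
      exact Finset.mem_union_left _ (Finset.mem_union_left _ hv)
    have hhighS : ∀ v, 1 < ρ * ((G.neighborSet v).ncard : ℝ) → v ∈ S := by
      intro v hv
      rw [hb] at hv
      exact hHsub v (Finset.mem_filter.mpr ⟨Finset.mem_univ v, hv⟩)
    have hsus : ∀ v ∈ S, 0 < (G.neighborSet v).ncard ∧
        ρ * (G.neighborSet v).ncard ≤ (((G.neighborSet v) ∩ S).ncard : ℝ) := by
      intro v hv
      refine ⟨hnc v, ?_⟩
      by_cases hhigh : 1 < ρ * (G.degree v : ℝ)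
      · have hvH : v ∈ H := Finset.mem_filter.mpr ⟨Finset.mem_univ v, hhigh⟩
        have hsub : (↑(P v) : Set V) ⊆ G.neighborSet v ∩ S := by
          intro x hx
          have hx' : x ∈ P v := hx
          constructor
          · have := hPsub v hx'
            rwa [SimpleGraph.mem_neighborFinset] at this
          · rw [hSdef]
            norm_cast
            rw [hSfdef]
            exact Finset.mem_union_left _ (Finset.mem_union_right _
              (Finset.mem_biUnion.mpr ⟨v, hvH, hx'⟩))
        calc ρ * ((G.neighborSet v).ncard : ℝ)
            ≤ (⌈ρ * (G.degree v : ℝ)⌉₊ : ℝ) := by rw [hb]; exact Nat.le_ceil _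
          _ = ((P v).card : ℝ) := by rw [hPcard]
          _ = (((↑(P v) : Set V)).ncard : ℝ) := by rw [Set.ncard_coe_finset]
          _ ≤ (((G.neighborSet v) ∩ S).ncard : ℝ) := by
              exact_mod_cast Set.ncard_le_ncard hsub (Set.toFinite _)
      · have hle : ρ * ((G.neighborSet v).ncard : ℝ) ≤ 1 := by
          rw [hb]; linarith [le_of_not_gt hhigh]
        have hnbr : ∃ w, G.Adj v w ∧ w ∈ S := by
          rw [hSdef] at hv
          norm_cast at hv
          rw [hSfdef] at hv
          rcases Finset.mem_union.mp hv with h1 | h2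
          · rcases Finset.mem_union.mp h1 with hH | hBi
            · exact absurd (Finset.mem_filter.mp hH).2 hhigh
            · obtain ⟨w, hwH, hvP⟩ := Finset.mem_biUnion.mp hBi
              have := hPsub w hvP
              rw [SimpleGraph.mem_neighborFinset] at this
              exact ⟨w, this.symm, hHsub w hwH⟩
          · rcases Finset.mem_insert.mp h2 with h | h
            · exact ⟨u1, h ▸ hadj01, hu1S⟩
            · rw [Finset.mem_singleton] at h
              exact ⟨u0, h ▸ hadj01.symm, hu0S⟩
        obtain ⟨w, hw, hwS⟩ := hnbr
        have h1 : 0 < ((G.neighborSet v) ∩ S).ncard := by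
          rw [Set.ncard_pos (Set.toFinite _)]
          exact ⟨w, hw, hwS⟩
        have h1' : (1:ℝ) ≤ (((G.neighborSet v) ∩ S).ncard : ℝ) := by exact_mod_cast h1
        linarith
    have hcov : ractive G ρ S G.diam = Set.univ :=
      Set.eq_univ_of_forall (fun v =>
        ractive_spread hG hu0S hsus hhighS hnc G.diam v (hdist u0 v))
    -- counting
    have hnat : Sfin.card ≤ H.card + (∑ v ∈ H, (P v).card) + 2 := by
      have c1 : Sfin.card ≤ (H ∪ H.biUnion P).card + ({u0, u1} : Finset V).card := by
        rw [hSfdef]; exact Finset.card_union_le _ _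
      have c2 : (H ∪ H.biUnion P).card ≤ H.card + (H.biUnion P).card :=
        Finset.card_union_le _ _
      have c3 : (H.biUnion P).card ≤ ∑ v ∈ H, (P v).card := Finset.card_biUnion_le
      have c4 : ({u0, u1} : Finset V).card ≤ 2 := by
        apply le_trans (Finset.card_insert_le u0 {u1})
        simp
      omega
    have hreal : (Sfin.card : ℝ) ≤ ∑ v ∈ H, (2 + ρ * (G.degree v : ℝ)) + 2 := by
      have e1 : ∑ v ∈ H, (1 + ((P v).card : ℝ)) =
          ((H.card : ℝ) + (∑ v ∈ H, ((P v).card : ℝ))) := by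
        rw [Finset.sum_add_distrib, Finset.sum_const, nsmul_eq_mul, mul_one]
      have e2 : ∀ v ∈ H, 1 + ((P v).card : ℝ) ≤ 2 + ρ * (G.degree v : ℝ) := by
        intro v _
        rw [hPcard]
        have h0 : (0:ℝ) ≤ ρ * (G.degree v : ℝ) := by positivity
        have := Nat.ceil_lt_add_one h0
        linarith
      have e3 : ∑ v ∈ H, (1 + ((P v).card : ℝ)) ≤ ∑ v ∈ H, (2 + ρ * (G.degree v : ℝ)) :=
        Finset.sum_le_sum e2
      rw [e1] at e3
      have e4 : (Sfin.card : ℝ) ≤ (H.card : ℝ) + (∑ v ∈ H, ((P v).card : ℝ)) + 2 := by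
        push_cast
        exact_mod_cast hnat
      linarith
    have hpl' : ∀ k : ℕ, 0 < k →
        ((Finset.univ.filter (fun v => G.degree v = k)).card : ℝ) ≤ C * n / (k : ℝ) ^ γ := by
      intro k hk
      have e : ({v : V | (G.neighborSet v).ncard = k} : Set V).ncard =
          (Finset.univ.filter (fun v => G.degree v = k)).card := by
        have : ({v : V | (G.neighborSet v).ncard = k} : Set V) = {v : V | G.degree v = k} := by
          ext v; simp [hb]
        rw [this, Set.ncard_eq_toFinset_card', Set.toFinset_setOf]
      have := hpl k hk
      rw [e] at this
      exact this
    have hsumb := degree_sum_bound G C γ ρ hC hγ hρ hhalf hpl' H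
      (fun v hv => (Finset.mem_filter.mp hv).2)
    have hKA : C * (n : ℝ) *
        (2 * (2:ℝ) ^ (γ - 1) * ρ ^ (γ - 1) / (γ - 1) +
          (2:ℝ) ^ (γ - 2) * ρ ^ (γ - 1) / (γ - 2)) = K1 * A := by
      rw [hK1def, hAdef]; ring
    have hmsle : (minSeed G ρ G.diam : ℝ) ≤ (Sfin.card : ℝ) := by
      have := hms S hcov
      rw [hSdef, Set.ncard_coe_finset] at this
      exact_mod_cast this
    have hfin : (minSeed G ρ G.diam : ℝ) ≤ K1 * A + 2 := by
      rw [← hKA]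
      calc (minSeed G ρ G.diam : ℝ) ≤ (Sfin.card : ℝ) := hmsle
        _ ≤ ∑ v ∈ H, (2 + ρ * (G.degree v : ℝ)) + 2 := hreal
        _ ≤ _ + 2 := by linarith [hsumb]
    calc (minSeed G ρ G.diam : ℝ) ≤ K1 * A + 2 := hfin
      _ ≤ K1 * B + 2 * B := by nlinarith
      _ ≤ (K1 + 2 + (2:ℝ) ^ (γ - 1)) * B := by nlinarith
  · -- trivial case : seed everything
    have hsus : ∀ v ∈ (Set.univ : Set V), 0 < (G.neighborSet v).ncard ∧
        ρ * (G.neighborSet v).ncard ≤ (((G.neighborSet v) ∩ Set.univ).ncard : ℝ) := by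
      intro v _
      refine ⟨hnc v, ?_⟩
      rw [Set.inter_univ]
      have h0 : (0:ℝ) ≤ ((G.neighborSet v).ncard : ℝ) := by positivity
      nlinarith
    have hcov : ractive G ρ (Set.univ : Set V) G.diam = Set.univ :=
      Set.univ_subset_iff.mp (ractive_sustain hsus G.diam)
    have h1 : minSeed G ρ G.diam ≤ n := by
      have := hms Set.univ hcov
      rwa [Set.ncard_univ, Nat.card_eq_fintype_card] at this
    have h2 : (n:ℝ) ≤ (2:ℝ) ^ (γ - 1) * A := by
      have hge1 : (1:ℝ) ≤ (2*ρ) ^ (γ - 1) := by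
        calc (1:ℝ) = (1:ℝ) ^ (γ - 1) := (Real.one_rpow _).symm
          _ ≤ (2*ρ) ^ (γ - 1) :=
            Real.rpow_le_rpow (by norm_num) (by linarith) (by linarith)
      have hmul : (2*ρ) ^ (γ - 1) = (2:ℝ) ^ (γ - 1) * ρ ^ (γ - 1) :=
        Real.mul_rpow (by norm_num) hρ.le
      have hn0 : (0:ℝ) ≤ (n:ℝ) := by positivity
      rw [hAdef]
      nlinarith [hge1, hmul]
    calc (minSeed G ρ G.diam : ℝ) ≤ (n : ℝ) := by exact_mod_cast h1
      _ ≤ (2:ℝ) ^ (γ - 1) * A := h2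
      _ ≤ (2:ℝ) ^ (γ - 1) * B := by nlinarith
      _ ≤ (K1 + 2 + (2:ℝ) ^ (γ - 1)) * B := by nlinarith
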